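/- If σ is a cycle in the symmetric group on {1,…,n} (a permutation whose nontrivial orbits consist of a single orbit with at least two elements), then ℓ(σ) + 1 ≥ ord(σ), where ℓ(σ) is the number of inversions of σ and ord(σ) is the order of σ as a group element. Moreover, equality ℓ(σ) + 1 = ord(σ) holds if and only if σ is a product of pairwise distinct simple transpositions. -/

import Mathlib

/-- The number of inversions (the length) of a permutation of `{1,…,n}`. -/
def invCount {n : ℕ} (σ : Equiv.Perm (Fin n)) : ℕ :=
  (Finset.univ.filter fun p : Fin n × Fin n => p.1 < p.2 ∧ σ p.2 < σ p.1).card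

/-- The number of orbits of `{1,…,n}` under the cyclic group generated by `σ`. -/
noncomputable def orbitCount {n : ℕ} (σ : Equiv.Perm (Fin n)) : ℕ :=
  Nat.card (MulAction.orbitRel.Quotient (Subgroup.zpowers σ) (Fin n))

/-- A simple transposition: a swap of two consecutive integers `i` and `i+1`. -/
def IsSimpleTransposition {n : ℕ} (τ : Equiv.Perm (Fin n)) : Prop :=
  ∃ (i : ℕ) (h : i + 1 < n), τ = Equiv.swap ⟨i, Nat.lt_of_succ_lt h⟩ ⟨i + 1, h⟩

/-- `σ` is the product of a (possibly empty) list of pairwise distinct simple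
transpositions. -/
def IsProdOfDistinctSimpleTranspositions {n : ℕ} (σ : Equiv.Perm (Fin n)) : Prop :=
  ∃ l : List (Equiv.Perm (Fin n)),
    l.Nodup ∧ (∀ τ ∈ l, IsSimpleTransposition τ) ∧ σ = l.prod

open Equiv Finset


def sw (n i : ℕ) (h : i + 1 < n) : Equiv.Perm (Fin n) :=
  Equiv.swap ⟨i, Nat.lt_of_succ_lt h⟩ ⟨i + 1, h⟩

variable {n : ℕ}

lemma sw_apply (i : ℕ) (h : i + 1 < n) (x : Fin n) :
    ((sw n i h) x).1 = if x.1 = i then i + 1 else if x.1 = i + 1 then i else x.1 := by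
  unfold sw
  rcases eq_or_ne x ⟨i, Nat.lt_of_succ_lt h⟩ with rfl | hx
  · simp
  · rcases eq_or_ne x ⟨i + 1, h⟩ with rfl | hx'
    · simp
    · rw [Equiv.swap_apply_of_ne_of_ne hx hx']
      have h1 : x.1 ≠ i := fun e => hx (Fin.ext e)
      have h2 : x.1 ≠ i + 1 := fun e => hx' (Fin.ext e)
      simp [h1, h2]

lemma sw_inj {i j : ℕ} (hi : i + 1 < n) (hj : j + 1 < n)
    (e : sw n i hi = sw n j hj) : i = j := by
  have h1 : ((sw n i hi) ⟨i, Nat.lt_of_succ_lt hi⟩).1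
      = ((sw n j hj) ⟨i, Nat.lt_of_succ_lt hi⟩).1 := by rw [e]
  rw [sw_apply, sw_apply] at h1
  simp only [Fin.val_mk] at h1
  split_ifs at h1 <;> omega

lemma sw_lt_iff (i : ℕ) (h : i + 1 < n) (u v : Fin n)
    (h1 : ¬(u.1 = i ∧ v.1 = i + 1)) (h2 : ¬(u.1 = i + 1 ∧ v.1 = i)) :
    sw n i h u < sw n i h v ↔ u < v := by
  rw [Fin.lt_def, Fin.lt_def, sw_apply, sw_apply]
  have hu := u.isLt
  have hv := v.isLt
  split_ifs <;> omega

lemma invCount_one : invCount (1 : Equiv.Perm (Fin n)) = 0 := by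
  unfold invCount
  rw [Finset.card_eq_zero, Finset.filter_eq_empty_iff]
  rintro ⟨x, y⟩ -
  simp only [Equiv.Perm.one_apply, not_and]
  intro h1 h2
  exact absurd (h1.trans h2) (lt_irrefl _)
lemma invCount_sw_mul_of_lt (i : ℕ) (h : i + 1 < n) (π : Equiv.Perm (Fin n))
    (hab : π⁻¹ ⟨i, Nat.lt_of_succ_lt h⟩ < π⁻¹ ⟨i + 1, h⟩) :
    invCount (sw n i h * π) = invCount π + 1 := by
  set i0 : Fin n := ⟨i, Nat.lt_of_succ_lt h⟩ with hi0
  set i1 : Fin n := ⟨i + 1, h⟩ with hi1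
  set a := π⁻¹ i0 with ha
  set b := π⁻¹ i1 with hb
  have hπa : π a = i0 := Equiv.apply_symm_apply π i0
  have hπb : π b = i1 := Equiv.apply_symm_apply π i1
  have hswi0 : sw n i h i0 = i1 := Equiv.swap_apply_left _ _
  have hswi1 : sw n i h i1 = i0 := Equiv.swap_apply_right _ _
  have hset : (Finset.univ.filter fun p : Fin n × Fin n =>
        p.1 < p.2 ∧ (sw n i h * π) p.2 < (sw n i h * π) p.1)
      = insert (a, b) (Finset.univ.filter fun p : Fin n × Fin n =>
        p.1 < p.2 ∧ π p.2 < π p.1) := by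
    ext p
    rw [Finset.mem_filter, Finset.mem_insert, Finset.mem_filter]
    simp only [Finset.mem_insert, Finset.mem_filter, Finset.mem_univ, true_and,
      Equiv.Perm.mul_apply]
    constructor
    · rintro ⟨hlt, hv⟩
      rcases eq_or_ne p (a, b) with rfl | hp
      · exact Or.inl rfl
      · refine Or.inr ⟨hlt, ?_⟩
        rw [sw_lt_iff i h (π p.2) (π p.1) ?_ ?_] at hv
        · exact hv
        · rintro ⟨e2, e1⟩
          have hpa : p.2 = a := by
            rw [ha]; apply π.injective; rw [hπa]; exact Fin.ext e2
          have h2 : p.1 = b := by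
            rw [hb]; apply π.injective; rw [hπb]; exact Fin.ext e1
          rw [hpa, h2] at hlt
          exact absurd (hab.trans hlt) (lt_irrefl _)
        · rintro ⟨e2, e1⟩
          apply hp
          have h2 : p.2 = b := by
            rw [hb]; apply π.injective; rw [hπb]; exact Fin.ext e2
          have h1 : p.1 = a := by
            rw [ha]; apply π.injective; rw [hπa]; exact Fin.ext e1
          exact Prod.ext h1 h2
    · rintro (rfl | ⟨hlt, hv⟩)
      · refine ⟨hab, ?_⟩
        simp only [hπa, hπb, hswi0, hswi1]
        exact Fin.mk_lt_mk.mpr (Nat.lt_succ_self i)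
      · refine ⟨hlt, ?_⟩
        rw [sw_lt_iff i h (π p.2) (π p.1) ?_ ?_]
        · exact hv
        · rintro ⟨e2, e1⟩
          have h2 : π p.2 = i0 := Fin.ext e2
          have h1 : π p.1 = i1 := Fin.ext e1
          have : p.2 = a := by rw [ha]; apply π.injective; rw [hπa]; exact h2
          have hb1 : p.1 = b := by rw [hb]; apply π.injective; rw [hπb]; exact h1
          rw [this, hb1] at hlt
          exact absurd (hab.trans hlt) (lt_irrefl _)
        · rintro ⟨e2, e1⟩
          have h2 : π p.2 = i1 := Fin.ext e2
          have h1 : π p.1 = i0 := Fin.ext e1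
          rw [h1, h2] at hv
          exact absurd hv (by rw [Fin.lt_def]; simp [hi0, hi1])
  have hnotmem : (a, b) ∉ (Finset.univ.filter fun p : Fin n × Fin n =>
      p.1 < p.2 ∧ π p.2 < π p.1) := by
    simp only [Finset.mem_filter, Finset.mem_univ, true_and, not_and]
    intro _
    rw [hπa, hπb]
    rw [Fin.lt_def]
    simp [hi0, hi1]
  unfold invCount
  rw [hset, Finset.card_insert_of_notMem hnotmem]

lemma sw_mul_sw_mul (i : ℕ) (h : i + 1 < n) (π : Equiv.Perm (Fin n)) :
    sw n i h * (sw n i h * π) = π := by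
  rw [← mul_assoc]
  unfold sw
  rw [Equiv.swap_mul_self, one_mul]

lemma invCount_sw_mul_of_gt (i : ℕ) (h : i + 1 < n) (π : Equiv.Perm (Fin n))
    (hab : π⁻¹ ⟨i + 1, h⟩ < π⁻¹ ⟨i, Nat.lt_of_succ_lt h⟩) :
    invCount π = invCount (sw n i h * π) + 1 := by
  have hinv : (sw n i h * π)⁻¹ ⟨i, Nat.lt_of_succ_lt h⟩ < (sw n i h * π)⁻¹ ⟨i + 1, h⟩ := by
    rw [mul_inv_rev]
    have hsw : (sw n i h)⁻¹ = sw n i h := by unfold sw; exact Equiv.swap_inv _ _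
    rw [hsw]
    simp only [Equiv.Perm.mul_apply]
    have h1 : sw n i h ⟨i, Nat.lt_of_succ_lt h⟩ = ⟨i + 1, h⟩ := Equiv.swap_apply_left _ _
    have h2 : sw n i h ⟨i + 1, h⟩ = ⟨i, Nat.lt_of_succ_lt h⟩ := Equiv.swap_apply_right _ _
    rw [h1, h2]
    exact hab
  have := invCount_sw_mul_of_lt i h (sw n i h * π) hinv
  rwa [sw_mul_sw_mul] at this

lemma invCount_sw_mul_le (i : ℕ) (h : i + 1 < n) (π : Equiv.Perm (Fin n)) :
    invCount (sw n i h * π) ≤ invCount π + 1 := by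
  rcases lt_trichotomy (π⁻¹ ⟨i, Nat.lt_of_succ_lt h⟩) (π⁻¹ ⟨i + 1, h⟩) with hlt | heq | hgt
  · rw [invCount_sw_mul_of_lt i h π hlt]
  · exfalso
    have := π⁻¹.injective heq
    exact absurd (congrArg Fin.val this) (by simp)
  · rw [invCount_sw_mul_of_gt i h π hgt]
    omega
lemma fin_mk_eq {a : ℕ} {h : a < n} {y : Fin n} (e : a = y.1) : (⟨a, h⟩ : Fin n) = y :=
  Fin.ext e

lemma eq_one_of_no_descent (σ : Equiv.Perm (Fin n))
    (hd : ∀ (i : ℕ) (h : i + 1 < n), σ ⟨i, Nat.lt_of_succ_lt h⟩ < σ ⟨i + 1, h⟩) :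
    σ = 1 := by
  have mono : ∀ d (x y : Fin n), y.1 = x.1 + d + 1 → σ x < σ y := by
    intro d
    induction d with
    | zero =>
      intro x y hy
      have hx1 : x.1 + 1 < n := by have := y.isLt; omega
      have := hd x.1 hx1
      have hx : (⟨x.1, Nat.lt_of_succ_lt hx1⟩ : Fin n) = x := fin_mk_eq rfl
      have hyy : (⟨x.1 + 1, hx1⟩ : Fin n) = y := fin_mk_eq (by omega)
      rwa [hx, hyy] at this
    | succ d ih =>
      intro x y hy
      have hm : x.1 + d + 1 < n := by have := y.isLt; omega
      have h1 := ih x ⟨x.1 + d + 1, hm⟩ rfl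
      have hx1 : x.1 + d + 1 + 1 < n := by have := y.isLt; omega
      have h2 := hd (x.1 + d + 1) hx1
      have hyy : (⟨x.1 + d + 1 + 1, hx1⟩ : Fin n) = y := fin_mk_eq (by omega)
      rw [hyy] at h2
      exact h1.trans h2
  have hsm : StrictMono σ := by
    intro x y hxy
    have : y.1 = x.1 + (y.1 - x.1 - 1) + 1 := by
      have := Fin.lt_def.mp hxy; omega
    exact mono _ x y this
  have e : Fin n ≃o Fin n := StrictMono.orderIsoOfSurjective σ hsm σ.surjective
  ext x
  have h1 : ((StrictMono.orderIsoOfSurjective (⇑σ) hsm σ.surjective) x : Fin n).1 = x.1 :=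
    Fin.coe_orderIso_apply _ x
  have h2 : (StrictMono.orderIsoOfSurjective (⇑σ) hsm σ.surjective) x = σ x := rfl
  rw [h2] at h1
  simpa using h1

lemma exists_word : ∀ (N : ℕ) (σ : Equiv.Perm (Fin n)), invCount σ = N →
    ∃ l : List (Equiv.Perm (Fin n)),
      (∀ τ ∈ l, IsSimpleTransposition τ) ∧ σ = l.prod ∧ l.length = invCount σ := by
  intro N
  induction N using Nat.strong_induction_on with
  | _ N ih =>
    intro σ hN
    rcases eq_or_ne σ 1 with rfl | hσ1
    · exact ⟨[], by simp, by simp, by simp [invCount_one]⟩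
    · have hdesc : ∃ (i : ℕ) (h : i + 1 < n),
          σ⁻¹ ⟨i + 1, h⟩ < σ⁻¹ ⟨i, Nat.lt_of_succ_lt h⟩ := by
        by_contra hc
        push_neg at hc
        have : σ⁻¹ = 1 := by
          apply eq_one_of_no_descent
          intro i h
          rcases lt_trichotomy (σ⁻¹ ⟨i, Nat.lt_of_succ_lt h⟩) (σ⁻¹ ⟨i + 1, h⟩) with h1 | h2 | h3
          · exact h1
          · exact absurd (congrArg Fin.val (σ⁻¹.injective h2)) (by simp)
          · exact absurd h3 (not_lt.mpr (hc i h))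
        exact hσ1 (by rw [← inv_inv σ, this, inv_one])
      obtain ⟨i, h, hlt⟩ := hdesc
      have hdec : invCount σ = invCount (sw n i h * σ) + 1 :=
        invCount_sw_mul_of_gt i h σ hlt
      obtain ⟨l', hl's, hl'p, hl'len⟩ :=
        ih (invCount (sw n i h * σ)) (by omega) (sw n i h * σ) rfl
      refine ⟨sw n i h :: l', ?_, ?_, ?_⟩
      · intro τ hτ
        rcases List.mem_cons.mp hτ with rfl | hτ'
        · exact ⟨i, h, rfl⟩
        · exact hl's τ hτ'
      · rw [List.prod_cons, ← hl'p, sw_mul_sw_mul]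
      · simp [hl'len, hdec]

lemma invCount_prod_le (l : List (Equiv.Perm (Fin n)))
    (hl : ∀ τ ∈ l, IsSimpleTransposition τ) : invCount l.prod ≤ l.length := by
  induction l with
  | nil => simp [invCount_one]
  | cons τ t ih =>
    obtain ⟨i, h, rfl⟩ := hl τ (List.mem_cons_self (a := τ) (l := t))
    rw [List.prod_cons]
    have h1 : invCount (sw n i h * t.prod) ≤ invCount t.prod + 1 := invCount_sw_mul_le i h t.prod
    have h2 := ih (fun τ' hτ' => hl τ' (List.mem_cons_of_mem _ hτ'))
    simpa [sw] using le_trans (by simpa [sw] using h1) (by omega)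
lemma sw_le_iff (i : ℕ) (h : i + 1 < n) (c : ℕ) (hic : i ≠ c) (x : Fin n) :
    ((sw n i h) x).1 ≤ c ↔ x.1 ≤ c := by
  rw [sw_apply]
  split_ifs <;> omega

lemma prod_le_iff (l : List (Equiv.Perm (Fin n)))
    (hl : ∀ τ ∈ l, IsSimpleTransposition τ) (c : ℕ)
    (hc : ∀ (h : c + 1 < n), sw n c h ∉ l) (x : Fin n) :
    (l.prod x).1 ≤ c ↔ x.1 ≤ c := by
  induction l with
  | nil => simp
  | cons τ t ih =>
    obtain ⟨i, h, hτ0⟩ := hl τ (List.mem_cons_self (a := τ) (l := t))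
    have hτ : τ = sw n i h := hτ0
    have hic : i ≠ c := by
      rintro rfl
      have h2 : sw n i h = τ := hτ.symm
      exact hc h (h2 ▸ List.mem_cons_self (a := τ) (l := t))
    rw [List.prod_cons, Equiv.Perm.mul_apply, hτ]
    rw [sw_le_iff i h c hic]
    exact ih (fun τ' hτ' => hl τ' (List.mem_cons_of_mem _ hτ'))
      (fun h' hmem => hc h' (List.mem_cons_of_mem _ hmem))

lemma pow_le_iff (σ : Equiv.Perm (Fin n)) (c : ℕ)
    (hσ : ∀ x, (σ x).1 ≤ c ↔ x.1 ≤ c) :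
    ∀ (k : ℕ) (x : Fin n), ((σ ^ k) x).1 ≤ c ↔ x.1 ≤ c := by
  intro k
  induction k with
  | zero => intro x; simp
  | succ k ih =>
    intro x
    rw [pow_succ, Equiv.Perm.mul_apply]
    rw [ih (σ x)]
    exact hσ x

lemma index_mem (l : List (Equiv.Perm (Fin n)))
    (hl : ∀ τ ∈ l, IsSimpleTransposition τ) (hcyc : l.prod.IsCycle)
    (c : ℕ) (y z : Fin n) (hy : y ∈ l.prod.support) (hz : z ∈ l.prod.support)
    (hyc : y.1 ≤ c) (hzc : c < z.1) :
    ∃ (h : c + 1 < n), sw n c h ∈ l := by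
  by_contra hcon
  push_neg at hcon
  have pres := prod_le_iff l hl c hcon
  obtain ⟨x, hx, hall⟩ := hcyc
  have h1 : (l.prod).SameCycle y z :=
    ((hall (Equiv.Perm.mem_support.mp hy)).symm.trans (hall (Equiv.Perm.mem_support.mp hz)))
  obtain ⟨k, _, hk⟩ := h1.exists_pow_eq'
  have := (pow_le_iff l.prod c pres k y).mpr hyc
  rw [hk] at this
  omega

/-- Extract the index of a simple transposition. -/
noncomputable def swIdx (τ : Equiv.Perm (Fin n)) : ℕ :=
  if hne : τ.support.Nonempty then (τ.support.min' hne).1 else 0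

lemma swIdx_sw (i : ℕ) (h : i + 1 < n) : swIdx (sw n i h) = i := by
  have hne2 : (⟨i, Nat.lt_of_succ_lt h⟩ : Fin n) ≠ ⟨i + 1, h⟩ := by
    intro e
    exact absurd (congrArg Fin.val e) (by simp)
  have hsupp : (sw n i h).support = {⟨i, Nat.lt_of_succ_lt h⟩, ⟨i + 1, h⟩} := by
    unfold sw
    exact Equiv.Perm.support_swap hne2
  have hne : (sw n i h).support.Nonempty := by
    rw [hsupp]; exact ⟨_, Finset.mem_insert_self _ _⟩
  unfold swIdx
  rw [dif_pos hne]
  have hmin : (sw n i h).support.min' hne = ⟨i, Nat.lt_of_succ_lt h⟩ := by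
    apply le_antisymm
    · exact Finset.min'_le _ _ (by rw [hsupp]; exact Finset.mem_insert_self _ _)
    · apply Finset.le_min'
      intro y hy
      rw [hsupp] at hy
      rcases Finset.mem_insert.mp hy with rfl | hy2
      · exact le_refl _
      · rw [Finset.mem_singleton.mp hy2]
        exact Fin.mk_le_mk.mpr (Nat.le_succ i)
  rw [hmin]

lemma key_bound (l : List (Equiv.Perm (Fin n)))
    (hl : ∀ τ ∈ l, IsSimpleTransposition τ) (hcyc : l.prod.IsCycle) :
    l.prod.support.card ≤ l.length + 1 ∧
      (l.prod.support.card = l.length + 1 → l.Nodup) := by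
  have hne : l.prod.support.Nonempty := by
    rw [← Finset.card_pos]
    rcases Nat.eq_zero_or_pos l.prod.support.card with h0 | h1
    · exact absurd (Equiv.Perm.card_support_eq_zero.mp h0) hcyc.ne_one
    · exact h1
  set a := l.prod.support.min' hne with ha
  set b := l.prod.support.max' hne with hb
  have hab : a.1 ≤ b.1 := Finset.min'_le _ _ (Finset.max'_mem _ hne)
  -- support card bound via Icc
  have hsub : l.prod.support.image Fin.val ⊆ Finset.Icc a.1 b.1 := by
    intro c hcmem
    obtain ⟨x, hx, rfl⟩ := Finset.mem_image.mp hcmem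
    exact Finset.mem_Icc.mpr ⟨Finset.min'_le _ _ hx, Finset.le_max' _ _ hx⟩
  have hcard1 : l.prod.support.card ≤ b.1 + 1 - a.1 := by
    calc l.prod.support.card = (l.prod.support.image Fin.val).card :=
          (Finset.card_image_of_injective _ Fin.val_injective).symm
      _ ≤ (Finset.Icc a.1 b.1).card := Finset.card_le_card hsub
      _ = b.1 + 1 - a.1 := Nat.card_Icc _ _
  -- Ico a b ⊆ image of indices
  have hIco : Finset.Ico a.1 b.1 ⊆ l.toFinset.image swIdx := by
    intro c hcmem
    obtain ⟨hac, hcb⟩ := Finset.mem_Ico.mp hcmem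
    obtain ⟨h, hmem⟩ := index_mem l hl hcyc c a b (Finset.min'_mem _ hne)
      (Finset.max'_mem _ hne) hac hcb
    exact Finset.mem_image.mpr ⟨sw n c h, List.mem_toFinset.mpr hmem, swIdx_sw c h⟩
  have hcard2 : b.1 - a.1 ≤ l.toFinset.card := by
    calc b.1 - a.1 = (Finset.Ico a.1 b.1).card := (Nat.card_Ico _ _).symm
      _ ≤ (l.toFinset.image swIdx).card := Finset.card_le_card hIco
      _ ≤ l.toFinset.card := Finset.card_image_le
  have hcard3 : l.toFinset.card ≤ l.length := l.toFinset_card_le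
  constructor
  · omega
  · intro heq
    have hfin : l.toFinset.card = l.length := by omega
    rw [List.card_toFinset] at hfin
    have hsl : l.dedup.Sublist l := List.dedup_sublist l
    have : l.dedup = l := List.Sublist.eq_of_length hsl hfin
    rw [← this]
    exact l.nodup_dedup
lemma mem_support_of_mem (l : List (Equiv.Perm (Fin n)))
    (hl : ∀ τ ∈ l, IsSimpleTransposition τ) (hnd : l.Nodup)
    (i : ℕ) (h : i + 1 < n) (hmem : sw n i h ∈ l) :
    (⟨i, Nat.lt_of_succ_lt h⟩ : Fin n) ∈ l.prod.support ∧
      (⟨i + 1, h⟩ : Fin n) ∈ l.prod.support := by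
  induction l with
  | nil => simp at hmem
  | cons τ t ih =>
    obtain ⟨i0, h0, hτ0⟩ := hl τ (List.mem_cons_self (a := τ) (l := t))
    have hτ : τ = sw n i0 h0 := hτ0
    have hnd' := List.nodup_cons.mp hnd
    have hidx : ∀ (h' : i0 + 1 < n), sw n i0 h' ∉ t := by
      intro h' hmem'
      have he : sw n i0 h' = τ := hτ.symm
      exact hnd'.1 (he ▸ hmem')
    have pres := prod_le_iff t (fun τ' hτ' => hl τ' (List.mem_cons_of_mem _ hτ')) i0 hidx
    rw [List.prod_cons, hτ]
    have step : ∀ x : Fin n,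
        ((x.1 ≠ i0 ∧ x.1 ≠ i0 + 1) → x ∈ t.prod.support) →
        x ∈ (sw n i0 h0 * t.prod).support := by
      intro x hx
      rw [Equiv.Perm.mem_support, Equiv.Perm.mul_apply]
      intro heq
      have h2 : t.prod x = sw n i0 h0 x := by
        have h3 := congrArg (sw n i0 h0) heq
        unfold sw at h3
        rwa [Equiv.swap_apply_self] at h3
      have hv : (t.prod x).1 = (sw n i0 h0 x).1 := congrArg Fin.val h2
      rw [sw_apply] at hv
      by_cases e1 : x.1 = i0
      · have hp : (t.prod x).1 ≤ i0 := (pres x).mpr (by omega)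
        rw [if_pos e1] at hv
        omega
      · by_cases e2 : x.1 = i0 + 1
        · have hp : ¬((t.prod x).1 ≤ i0) := fun hle => by
            have := (pres x).mp hle; omega
          rw [if_neg e1, if_pos e2] at hv
          exact hp (by omega)
        · have hfix : t.prod x = x := by
            apply Fin.ext
            rw [if_neg e1, if_neg e2] at hv
            exact hv
          exact absurd hfix (Equiv.Perm.mem_support.mp (hx ⟨e1, e2⟩))
    rcases List.mem_cons.mp hmem with heq | hmem'
    · have hii : i = i0 := sw_inj h h0 (heq.trans hτ)
      subst hii
      refine ⟨step _ ?_, step _ ?_⟩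
      · intro hz; exact absurd rfl hz.1
      · intro hz; exact absurd rfl hz.2
    · have hres := ih (fun τ' hτ' => hl τ' (List.mem_cons_of_mem _ hτ')) hnd'.2 hmem'
      exact ⟨step _ (fun _ => hres.1), step _ (fun _ => hres.2)⟩

lemma nodup_length_lt_card (l : List (Equiv.Perm (Fin n)))
    (hl : ∀ τ ∈ l, IsSimpleTransposition τ) (hnd : l.Nodup)
    (hcyc : l.prod.IsCycle) :
    l.length + 1 ≤ l.prod.support.card := by
  have hlne : l ≠ [] := by
    rintro rfl
    exact hcyc.ne_one (by simp)
  set J := l.toFinset.image swIdx with hJ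
  have hJcard : J.card = l.length := by
    rw [hJ, Finset.card_image_of_injOn, List.toFinset_card_of_nodup hnd]
    intro τ1 h1 τ2 h2 he
    obtain ⟨i1, hi1, e1⟩ := hl τ1 (List.mem_toFinset.mp h1)
    obtain ⟨i2, hi2, e2⟩ := hl τ2 (List.mem_toFinset.mp h2)
    have e1' : τ1 = sw n i1 hi1 := e1
    have e2' : τ2 = sw n i2 hi2 := e2
    rw [e1', e2', swIdx_sw, swIdx_sw] at he
    subst he
    rw [e1', e2']
  have hJne : J.Nonempty := by
    apply Finset.image_nonempty.mpr
    rw [← List.toFinset_nonempty_iff] at hlne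
    exact hlne
  set jm := J.max' hJne with hjm
  have elem : ∀ c ∈ J, ∃ (h : c + 1 < n), sw n c h ∈ l := by
    intro c hc
    obtain ⟨τ, hτmem, hτidx⟩ := Finset.mem_image.mp hc
    obtain ⟨i1, hi1, e1⟩ := hl τ (List.mem_toFinset.mp hτmem)
    have e1' : τ = sw n i1 hi1 := e1
    rw [e1', swIdx_sw] at hτidx
    subst hτidx
    exact ⟨hi1, e1' ▸ List.mem_toFinset.mp hτmem⟩
  have hsub : insert (jm + 1) J ⊆ l.prod.support.image Fin.val := by
    intro c hc
    rcases Finset.mem_insert.mp hc with rfl | hcJ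
    · obtain ⟨h, hmem⟩ := elem jm (J.max'_mem hJne)
      exact Finset.mem_image.mpr
        ⟨⟨jm + 1, h⟩, (mem_support_of_mem l hl hnd jm h hmem).2, rfl⟩
    · obtain ⟨h, hmem⟩ := elem c hcJ
      exact Finset.mem_image.mpr
        ⟨⟨c, Nat.lt_of_succ_lt h⟩, (mem_support_of_mem l hl hnd c h hmem).1, rfl⟩
  have hcard : J.card + 1 ≤ (l.prod.support.image Fin.val).card := by
    have hnotmem : jm + 1 ∉ J := fun hmem => by
      have := Finset.le_max' J _ hmem
      omega
    calc J.card + 1 = (insert (jm + 1) J).card :=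
          (Finset.card_insert_of_notMem hnotmem).symm
      _ ≤ _ := Finset.card_le_card hsub
  rw [Finset.card_image_of_injective _ Fin.val_injective] at hcard
  omega

/-- If σ is a cycle then ℓ(σ) + 1 ≥ ord(σ), with equality if and only if σ is a
product of pairwise distinct simple transpositions. -/
theorem cycle_length_add_one_ge_orderOf (n : ℕ) (σ : Equiv.Perm (Fin n))
    (hσ : σ.IsCycle) :
    orderOf σ ≤ invCount σ + 1 ∧
      (invCount σ + 1 = orderOf σ ↔ IsProdOfDistinctSimpleTranspositions σ) := by
  have hord : orderOf σ = σ.support.card := hσ.orderOf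
  obtain ⟨l0, hl0s, hl0p, hl0len⟩ := exists_word (invCount σ) σ rfl
  have hcyc0 : l0.prod.IsCycle := hl0p ▸ hσ
  have hkey := key_bound l0 hl0s hcyc0
  have hsupp0 : l0.prod.support = σ.support := by rw [← hl0p]
  have hpart1 : orderOf σ ≤ invCount σ + 1 := by
    rw [hord, ← hsupp0]
    calc l0.prod.support.card ≤ l0.length + 1 := hkey.1
      _ = invCount σ + 1 := by rw [hl0len]
  refine ⟨hpart1, ?_, ?_⟩
  · intro heq
    have hc : l0.prod.support.card = l0.length + 1 := by
      rw [hsupp0, ← hord, ← heq, hl0len]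
    exact ⟨l0, hkey.2 hc, hl0s, hl0p⟩
  · rintro ⟨l, hnd, hls, hprod⟩
    have hcyc : l.prod.IsCycle := hprod ▸ hσ
    have h1 : invCount σ ≤ l.length := hprod ▸ invCount_prod_le l hls
    have h2 : l.length + 1 ≤ l.prod.support.card := nodup_length_lt_card l hls hnd hcyc
    have h3 : l.prod.support = σ.support := by rw [← hprod]
    rw [h3] at h2
    have h4 := hpart1
    rw [hord] at h4 ⊢
    omega
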